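/- Let F : ℝ → ℝ be twice differentiable with F'(u) ≠ 0 for all u in its domain, let h₁,…,hₙ : ℝ₊ → ℝ be thrice differentiable nonvanishing functions with nonvanishing first derivatives, and let f(x₁,…,xₙ) = F(h₁(x₁)·…·hₙ(xₙ)) on ℝ₊ⁿ. Then the bordered Hessian (Allen) matrix of f is singular at every point if and only if one of the following holds (up to permutation of the variables): (a) there are nonzero constants γ, α₁, α₂ such that h₁(t)·h₂(s) can be written as γ e^{α₁ t + α₂ s} (i.e. two of the factors are exponentials); or (b) there are nonzero constants γ, α₁,…,αₙ with α₁ + … + αₙ = 0 and constants β₁,…,βₙ such that h₁(x₁)·…·hₙ(xₙ) = γ (x₁+β₁)^{α₁}·…·(xₙ+βₙ)^{αₙ}. -/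

import Mathlib

open Real Finset

/-- The partial derivative of `f : ℝⁿ → ℝ` in the `i`-th coordinate direction. -/
noncomputable def pderiv' {n : ℕ} (f : (Fin n → ℝ) → ℝ) (i : Fin n) (x : Fin n → ℝ) : ℝ :=
  deriv (fun t => f (Function.update x i t)) (x i)

/-- The bordered Hessian (Allen) matrix of `f : ℝⁿ → ℝ`: the `(n+1)×(n+1)`
matrix whose first row and column are `(0, f_{x₁}, …, f_{xₙ})` and whose
remaining `n×n` block is the Hessian matrix. -/
noncomputable def borderedHessian {n : ℕ} (f : (Fin n → ℝ) → ℝ) (x : Fin n → ℝ) :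
    Matrix (Fin (n + 1)) (Fin (n + 1)) ℝ :=
  Matrix.of fun i =>
    Fin.cases (motive := fun _ => Fin (n + 1) → ℝ)
      (Fin.cons 0 fun j => pderiv' f j x)
      (fun i' => Fin.cons (pderiv' f i' x) fun j => pderiv' (pderiv' f j) i' x) i

noncomputable def bmat (n : ℕ) (b : Fin n → ℝ) (M : Fin n → Fin n → ℝ) :
    Matrix (Fin (n + 1)) (Fin (n + 1)) ℝ :=
  Matrix.of fun i =>
    Fin.cases (motive := fun _ => Fin (n + 1) → ℝ)
      (Fin.cons 0 b) (fun i' => Fin.cons (b i') (M i')) i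

lemma permMatrix_apply {n : ℕ} (σ : Equiv.Perm (Fin n)) (i j : Fin n) :
    σ.permMatrix ℝ i j = if σ i = j then 1 else 0 := by
  simp [Equiv.Perm.permMatrix, PEquiv.toMatrix, Equiv.toPEquiv]

lemma det_as_alt {n : ℕ} (m : Fin (n+1) → Fin (n+1) → ℝ) :
    Matrix.detRowAlternating (R := ℝ) m = (Matrix.of m).det := rfl

lemma detV (n : ℕ) (g d : Fin n → ℝ) :
    (bmat n g (fun i j => if i = j then d i else 0)).det
      = -∑ k, g k ^ 2 * ∏ l ∈ univ.erase k, d l := by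
  classical
  set rowsA : Fin (n + 1) → Fin (n + 1) → ℝ :=
    fun i => Fin.cases (motive := fun _ => Fin (n + 1) → ℝ) (Fin.cons 0 g)
      (fun i' => g i' • ((Pi.single (0 : Fin (n+1)) (1:ℝ)) : Fin (n+1) → ℝ)) i with hA
  set rowsB : Fin (n + 1) → Fin (n + 1) → ℝ :=
    fun i => Fin.cases (motive := fun _ => Fin (n + 1) → ℝ) 0 (fun i' => d i' • ((Pi.single (i'.succ) (1:ℝ)) : Fin (n+1) → ℝ)) i with hB
  have hsplit : (bmat n g (fun i j => if i = j then d i else 0)) =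
      Matrix.of (rowsA + rowsB) := by
    ext i j
    refine Fin.cases ?_ (fun i' => ?_) i
    · simp [bmat, hA, hB]
    · refine Fin.cases ?_ (fun j' => ?_) j
      · simp [bmat, hA, hB, Pi.single_apply, (Fin.succ_ne_zero i').symm]
      · simp [bmat, hA, hB, Pi.single_apply, Fin.succ_inj, eq_comm, Fin.succ_ne_zero]
  rw [hsplit]
  have hsum : (Matrix.of (rowsA + rowsB)).det
      = ∑ s : Finset (Fin (n+1)), (Matrix.of (s.piecewise rowsA rowsB)).det :=
    MultilinearMap.map_add_univ
      (Matrix.detRowAlternating (R := ℝ) (n := Fin (n+1))).toMultilinearMap rowsA rowsB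
  rw [hsum]
  classical
  set pairf : Fin n → Finset (Fin (n+1)) := fun k => {0, k.succ} with hpairf
  have hpinj : Function.Injective pairf := by
    intro a b hab
    have : a.succ ∈ pairf b := by rw [← hab]; simp [hpairf]
    simp [hpairf, Fin.succ_ne_zero, Fin.succ_inj] at this
    exact this
  have hkey : ∀ s : Finset (Fin (n+1)), s ∉ Finset.image pairf univ →
      (Matrix.of (s.piecewise rowsA rowsB)).det = 0 := by
    intro s hs
    by_cases h0 : (0 : Fin (n+1)) ∈ s
    · rcases Nat.lt_or_ge (s.erase 0).card 2 with hc | hc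
      · interval_cases hcard : (s.erase 0).card
        · -- s = {0}
          have hs0 : s = {0} := by
            apply Finset.eq_singleton_iff_unique_mem.2
            refine ⟨h0, fun a ha => ?_⟩
            by_contra hne
            exact absurd (Finset.card_eq_zero.1 hcard)
              (Finset.ne_empty_of_mem (Finset.mem_erase.2 ⟨hne, ha⟩))
          apply Matrix.det_eq_zero_of_column_eq_zero 0
          intro i
          refine Fin.cases ?_ (fun i' => ?_) i
          · simp [Finset.piecewise, h0, hA]
          · have : i'.succ ∉ s := by simp [hs0, Fin.succ_ne_zero]
            simp [Finset.piecewise, this, hB, Pi.single_apply, Fin.succ_ne_zero]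
        · -- s = {0, k.succ} : contradiction
          obtain ⟨a, ha⟩ := Finset.card_eq_one.1 hcard
          have ha0 : a ≠ 0 := by
            have : a ∈ s.erase 0 := by simp [ha]
            exact (Finset.mem_erase.1 this).1
          obtain ⟨k, rfl⟩ := Fin.eq_succ_of_ne_zero ha0
          exfalso
          apply hs
          refine Finset.mem_image.2 ⟨k, Finset.mem_univ _, ?_⟩
          rw [hpairf]
          have := Finset.insert_erase h0
          rw [ha] at this
          rw [← this]
      · -- two distinct successor rows
        obtain ⟨a, ha, b, hb, hab⟩ := Finset.one_lt_card.1 hc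
        obtain ⟨a', rfl⟩ := Fin.eq_succ_of_ne_zero (Finset.mem_erase.1 ha).1
        obtain ⟨b', rfl⟩ := Fin.eq_succ_of_ne_zero (Finset.mem_erase.1 hb).1
        have has : a'.succ ∈ s := (Finset.mem_erase.1 ha).2
        have hbs : b'.succ ∈ s := (Finset.mem_erase.1 hb).2
        set m := Matrix.of (s.piecewise rowsA rowsB) with hm
        have hma : m a'.succ = g a' • ((Pi.single 0 1 : Fin (n+1) → ℝ)) := by
          have hh : m a'.succ = rowsA a'.succ :=
            Finset.piecewise_eq_of_mem _ _ _ has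
          rw [hh]; simp [hA]
        have hmb : m b'.succ = g b' • ((Pi.single 0 1 : Fin (n+1) → ℝ)) := by
          have hh : m b'.succ = rowsA b'.succ :=
            Finset.piecewise_eq_of_mem _ _ _ hbs
          rw [hh]; simp [hA]
        have e1 : m.det = (m.updateRow a'.succ
            (g a' • ((Pi.single 0 1 : Fin (n+1) → ℝ)))).det := by
          rw [← hma, Matrix.updateRow_eq_self]
        set m1 := m.updateRow a'.succ ((Pi.single 0 1 : Fin (n+1) → ℝ)) with hm1
        have e2 : m1 b'.succ = g b' • ((Pi.single 0 1 : Fin (n+1) → ℝ)) := by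
          rw [hm1, Matrix.updateRow_ne hab.symm, hmb]
        have e3 : m1.det = (m1.updateRow b'.succ
            (g b' • ((Pi.single 0 1 : Fin (n+1) → ℝ)))).det := by
          rw [← e2, Matrix.updateRow_eq_self]
        have e4 : ((m1.updateRow b'.succ ((Pi.single 0 1 : Fin (n+1) → ℝ)))).det = 0 := by
          apply Matrix.det_zero_of_row_eq hab
          rw [Matrix.updateRow_ne hab, Matrix.updateRow_self, hm1, Matrix.updateRow_self]
        rw [e1, Matrix.det_updateRow_smul, ← hm1, e3, Matrix.det_updateRow_smul, e4]
        ring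
    · apply Matrix.det_eq_zero_of_row_eq_zero 0
      intro j
      simp [Finset.piecewise, h0, hB]
  rw [← Finset.sum_subset (Finset.subset_univ (Finset.image pairf univ))
    (fun s _ hs => hkey s hs)]
  rw [Finset.sum_image (fun a _ b _ hab => hpinj hab)]
  have hpair : ∀ k : Fin n, (Matrix.of ((pairf k).piecewise rowsA rowsB)).det
      = -(g k ^ 2 * ∏ l ∈ univ.erase k, d l) := by
    intro k
    set σ : Equiv.Perm (Fin (n+1)) := Equiv.swap 0 k.succ with hσ
    set c : Fin (n+1) → ℝ :=
      fun i => Fin.cases (motive := fun _ => ℝ) 1 (fun l => if l = k then g l else d l) i with hc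
    set N : Fin (n+1) → Fin (n+1) → ℝ :=
      fun i => Fin.cases (motive := fun _ => Fin (n+1) → ℝ) (Fin.cons 0 g)
        (fun l => if l = k then ((Pi.single 0 1 : Fin (n+1) → ℝ))
          else ((Pi.single l.succ 1 : Fin (n+1) → ℝ))) i with hN
    have hrows : (pairf k).piecewise rowsA rowsB = fun i => c i • N i := by
      funext i
      refine Fin.cases ?_ (fun l => ?_) i
      · have h0 : (0 : Fin (n+1)) ∈ pairf k := by simp [hpairf]
        simp [Finset.piecewise, h0, hA, hc, hN]
      · by_cases hl : l = k
        · subst hl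
          have hmem : l.succ ∈ pairf l := by simp [hpairf]
          simp [Finset.piecewise, hmem, hA, hc, hN]
        · have hmem : l.succ ∉ pairf k := by
            simp [hpairf, Fin.succ_ne_zero, Fin.succ_inj, hl]
          simp [Finset.piecewise, hmem, hB, hc, hN, hl]
    have hsm : (Matrix.of (fun i => c i • N i)).det = (∏ i, c i) • (Matrix.of N).det :=
      MultilinearMap.map_smul_univ
        (Matrix.detRowAlternating (R := ℝ) (n := Fin (n+1))).toMultilinearMap c N
    have hprodc : (∏ i, c i) = g k * ∏ l ∈ univ.erase k, d l := by
      rw [Fin.prod_univ_succ]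
      have h1 : (∏ l : Fin n, c l.succ) = ∏ l : Fin n, (if l = k then g l else d l) := by
        apply Finset.prod_congr rfl
        intro l _
        simp [hc]
      have h2 : (∏ l : Fin n, (if l = k then g l else d l))
          = (if k = k then g k else d k) * ∏ l ∈ univ.erase k, (if l = k then g l else d l) :=
        (Finset.mul_prod_erase univ _ (Finset.mem_univ k)).symm
      have h3 : (∏ l ∈ univ.erase k, (if l = k then g l else d l))
          = ∏ l ∈ univ.erase k, d l := by
        apply Finset.prod_congr rfl
        intro l hl
        simp [(Finset.mem_erase.1 hl).1]
      simp [hc, h1, h2, h3]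
    have hNP : Matrix.of N = (σ.permMatrix ℝ).updateRow 0 (Fin.cons 0 g) := by
      ext i j
      refine Fin.cases ?_ (fun l => ?_) i
      · simp [hN, Matrix.updateRow_self]
      · rw [Matrix.of_apply, Matrix.updateRow_ne (Fin.succ_ne_zero l)]
        by_cases hl : l = k
        · subst hl
          have : σ l.succ = 0 := by simp [hσ]
          simp [hN, Equiv.Perm.permMatrix, PEquiv.toMatrix_apply, Equiv.toPEquiv_apply,
            this, Pi.single_apply, eq_comm]
        · have h1 : l.succ ≠ (0 : Fin (n+1)) := Fin.succ_ne_zero l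
          have h2 : l.succ ≠ k.succ := by simp [Fin.succ_inj, hl]
          have hql : σ l.succ = l.succ := Equiv.swap_apply_of_ne_of_ne h1 h2
          have hkl : ¬ (k = l) := fun hh => hl hh.symm
          simp only [hN, Fin.cases_succ, if_neg hl]
          simp [Equiv.Perm.permMatrix, PEquiv.toMatrix_apply, Equiv.toPEquiv_apply,
            hql, Pi.single_apply, eq_comm]
    have hcons : Fin.cons (0:ℝ) g = ∑ i, (fun i => Fin.cases (motive := fun _ => ℝ) (g k)
        (fun l => if l = k then 0 else g l) i : Fin (n+1) → ℝ) i • (σ.permMatrix ℝ) i := by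
      funext j
      rw [Finset.sum_apply]
      have hterm : ∀ i : Fin (n+1), (Fin.cases (motive := fun _ => ℝ) (g k)
          (fun l => if l = k then 0 else g l) i • (σ.permMatrix ℝ) i) j
          = if i = σ j then Fin.cases (motive := fun _ => ℝ) (g k)
              (fun l => if l = k then 0 else g l) i else 0 := by
        intro i
        have : σ i = j ↔ i = σ j := by
          constructor
          · intro hh; rw [← hh]; simp [hσ]
          · intro hh; rw [hh]; simp [hσ]
        have hcond : (j = σ i) ↔ (i = σ j) := by
          constructor
          · intro hh; exact this.1 hh.symm
          · intro hh; exact (this.2 hh).symm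
        simp only [Equiv.Perm.permMatrix, PEquiv.toMatrix_apply, Equiv.toPEquiv_apply,
          Pi.smul_apply, smul_eq_mul, Option.mem_def, Option.some.injEq, mul_ite, mul_one,
          mul_zero]
        simp only [eq_comm (a := σ i) (b := j)] at *
        simp only [hcond]
      rw [Finset.sum_congr rfl (fun i _ => hterm i), Finset.sum_ite_eq' univ (σ j)]
      simp only [Finset.mem_univ, if_true]
      refine Fin.cases ?_ (fun l => ?_) j
      · have : σ (0 : Fin (n+1)) = k.succ := by simp [hσ]
        simp [this]
      · by_cases hl : l = k
        · subst hl
          have : σ l.succ = 0 := by simp [hσ]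
          simp [this]
        · have h1 : l.succ ≠ (0 : Fin (n+1)) := Fin.succ_ne_zero l
          have h2 : l.succ ≠ k.succ := by simp [Fin.succ_inj, hl]
          have : σ l.succ = l.succ := Equiv.swap_apply_of_ne_of_ne h1 h2
          simp [this, hl]
    have hdetN : (Matrix.of N).det = g k * (-1) := by
      rw [hNP, hcons, Matrix.det_updateRow_sum]
      have hdP : (σ.permMatrix ℝ).det = -1 := by
        rw [Matrix.det_permutation]
        have : Equiv.Perm.sign σ = -1 := by
          rw [hσ]
          exact Equiv.Perm.sign_swap (Fin.succ_ne_zero k).symm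
        simp [this]
      simp [hdP]
    rw [hrows, hsm, hprodc, hdetN]
    simp [smul_eq_mul]
    ring
  rw [Finset.sum_congr rfl (fun k _ => hpair k)]
  rw [Finset.sum_neg_distrib]

lemma detB (n : ℕ) (lam A : ℝ) (hlam : lam ≠ 0) (g d : Fin n → ℝ) :
    (bmat n (fun i => lam * g i)
      (fun i j => A * g i * g j + if i = j then lam * d i else 0)).det
    = -(lam ^ (n+1)) * ∑ k, g k ^ 2 * ∏ l ∈ univ.erase k, d l := by
  classical
  set W := bmat n g (fun i j => if i = j then d i else 0) with hW
  set rowsA : Fin (n + 1) → Fin (n + 1) → ℝ := fun i => lam • W i with hA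
  set rowsB : Fin (n + 1) → Fin (n + 1) → ℝ :=
    fun i => Fin.cases (motive := fun _ => Fin (n + 1) → ℝ) 0
      (fun i' => (A * g i' / lam) • rowsA 0) i with hB
  have hW0 : W 0 = Fin.cons (0:ℝ) g := by rw [hW]; rfl
  have hWs : ∀ i' : Fin n, W i'.succ =
      Fin.cons (g i') (fun j' => if i' = j' then d i' else 0) := by
    intro i'; rw [hW]; rfl
  have hsplit : (bmat n (fun i => lam * g i)
      (fun i j => A * g i * g j + if i = j then lam * d i else 0)) =
      Matrix.of (rowsA + rowsB) := by
    ext i j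
    refine Fin.cases ?_ (fun i' => ?_) i
    · refine Fin.cases ?_ (fun j' => ?_) j <;>
        simp [bmat, hA, hB, hW0]
    · refine Fin.cases ?_ (fun j' => ?_) j
      · simp [bmat, hA, hB, hWs, hW0]
      · simp only [bmat, Matrix.of_apply, Fin.cases_succ, Fin.cons_succ, Pi.add_apply,
          hA, hB, Pi.smul_apply, smul_eq_mul]
        rw [hW0, hWs i']
        simp only [Fin.cons_succ]
        by_cases hij : i' = j' <;> simp only [hij, if_pos, if_true, if_neg, ite_self]
        · field_simp
          ring
        · simp only [if_false]
          field_simp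
          ring
  rw [hsplit]
  have hsum : (Matrix.of (rowsA + rowsB)).det
      = ∑ s : Finset (Fin (n+1)), (Matrix.of (s.piecewise rowsA rowsB)).det :=
    MultilinearMap.map_add_univ
      (Matrix.detRowAlternating (R := ℝ) (n := Fin (n+1))).toMultilinearMap rowsA rowsB
  rw [hsum]
  rw [Finset.sum_eq_single Finset.univ]
  · have hpw : Finset.univ.piecewise rowsA rowsB = rowsA := by
      funext i
      exact Finset.piecewise_eq_of_mem _ _ _ (Finset.mem_univ i)
    rw [hpw]
    have : Matrix.of rowsA = lam • W := by
      ext i j; simp [hA, Matrix.smul_apply]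
    rw [this, Matrix.det_smul, detV]
    simp only [Fintype.card_fin]
    ring
  · intro s _ hsne
    by_cases h0 : (0 : Fin (n+1)) ∈ s
    · obtain ⟨a, ha⟩ : ∃ a, a ∉ s := by
        by_contra hh
        push_neg at hh
        exact hsne (Finset.eq_univ_iff_forall.2 hh)
      have ha0 : a ≠ 0 := fun hh => ha (hh ▸ h0)
      obtain ⟨k, rfl⟩ := Fin.eq_succ_of_ne_zero ha0
      set m := Matrix.of (s.piecewise rowsA rowsB) with hm
      have hmk : m k.succ = (A * g k / lam) • rowsA 0 := by
        have hh : s.piecewise rowsA rowsB k.succ = rowsB k.succ :=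
          Finset.piecewise_eq_of_notMem _ _ _ ha
        rw [hm]
        show s.piecewise rowsA rowsB k.succ = _
        rw [hh, hB]
        simp
      have hm0 : m 0 = rowsA 0 := by
        rw [hm]
        show s.piecewise rowsA rowsB 0 = _
        exact Finset.piecewise_eq_of_mem _ _ _ h0
      have e1 : m.det = (m.updateRow k.succ ((A * g k / lam) • rowsA 0)).det := by
        rw [← hmk, Matrix.updateRow_eq_self]
      rw [e1, Matrix.det_updateRow_smul]
      have e2 : (m.updateRow k.succ (rowsA 0)).det = 0 := by
        apply Matrix.det_zero_of_row_eq (Fin.succ_ne_zero k)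
        rw [Matrix.updateRow_self, Matrix.updateRow_ne (Fin.succ_ne_zero k).symm, hm0]
      rw [e2]
      ring
    · apply Matrix.det_eq_zero_of_row_eq_zero 0
      intro j
      have hh : (s.piecewise rowsA rowsB) 0 = rowsB 0 :=
        Finset.piecewise_eq_of_notMem _ _ _ h0
      have : rowsB 0 = 0 := rfl
      simp [Matrix.of_apply, hh, this]
  · intro hu
    exact absurd (Finset.mem_univ _) hu

lemma mem_nhds_pos {t : ℝ} (ht : 0 < t) : Set.Ioi (0:ℝ) ∈ nhds t :=
  isOpen_Ioi.mem_nhds ht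

lemma const_of_deriv0 (u : ℝ → ℝ) (hu : ∀ t > (0:ℝ), HasDerivAt u 0 t) :
    ∀ t > (0:ℝ), u t = u 1 := by
  intro t ht
  refine Convex.is_const_of_fderivWithin_eq_zero (convex_Ioi (0:ℝ))
    (fun s hs => (hu s hs).differentiableAt.differentiableWithinAt)
    (fun z hz => ?_) ht (by norm_num)
  rw [fderivWithin_of_isOpen isOpen_Ioi hz]
  have := (hu z hz).hasFDerivAt.fderiv
  rw [this]
  ext
  simp

/-- From vanishing derivative of `h'/h`, `h` is an exponential. -/
lemma exp_case (h : ℝ → ℝ) (hs : ContDiffOn ℝ 3 h (Set.Ioi 0))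
    (hne : ∀ t > (0:ℝ), h t ≠ 0) (hde : ∀ t > (0:ℝ), deriv h t ≠ 0)
    (hgz : ∀ t > (0:ℝ), deriv (fun t => deriv h t / h t) t = 0) :
    ∃ C α : ℝ, C ≠ 0 ∧ α ≠ 0 ∧ ∀ t > (0:ℝ), h t = C * Real.exp (α * t) := by
  have hC2 : ContDiffOn ℝ 2 (deriv h) (Set.Ioi 0) :=
    hs.deriv_of_isOpen isOpen_Ioi (by norm_num)
  have hD : ∀ t > (0:ℝ), HasDerivAt h (deriv h t) t := fun t ht =>
    ((hs.contDiffAt (mem_nhds_pos ht)).differentiableAt (by norm_num)).hasDerivAt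
  have hD2 : ∀ t > (0:ℝ), HasDerivAt (deriv h) (deriv (deriv h) t) t := fun t ht =>
    ((hC2.contDiffAt (mem_nhds_pos ht)).differentiableAt (by norm_num)).hasDerivAt
  set g : ℝ → ℝ := fun t => deriv h t / h t with hg
  have hgD : ∀ t > (0:ℝ), HasDerivAt g 0 t := by
    intro t ht
    have : HasDerivAt g (deriv g t) t := ((hD2 t ht).div (hD t ht) (hne t ht)).differentiableAt.hasDerivAt
    rwa [hgz t ht] at this
  have hgconst : ∀ t > (0:ℝ), g t = g 1 := const_of_deriv0 g hgD
  set α := g 1 with hα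
  have hαne : α ≠ 0 := by
    have := hgconst 1 one_pos
    have h1 : g 1 ≠ 0 := div_ne_zero (hde 1 one_pos) (hne 1 one_pos)
    exact h1
  refine ⟨h 1 * Real.exp (-α), α, mul_ne_zero (hne 1 one_pos) (Real.exp_ne_zero _), hαne, ?_⟩
  -- consider φ t = h t * exp (-α t)
  set φ : ℝ → ℝ := fun t => h t * Real.exp (-(α * t)) with hφ
  have hφD : ∀ t > (0:ℝ), HasDerivAt φ 0 t := by
    intro t ht
    have he : HasDerivAt (fun t : ℝ => Real.exp (-(α * t))) (-α * Real.exp (-(α * t))) t := by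
      have h1 : HasDerivAt (fun t : ℝ => -(α * t)) (-α) t := by
        exact (((hasDerivAt_id t).const_mul α).neg).congr_deriv (by simp)
      refine ((Real.hasDerivAt_exp (-(α * t))).comp t h1).congr_deriv ?_
      ring
    have := (hD t ht).mul he
    have hval : deriv h t * Real.exp (-(α * t)) + h t * (-α * Real.exp (-(α * t))) = 0 := by
      have hgt : deriv h t = α * h t := by
        have := hgconst t ht
        rw [hg] at this
        field_simp at this
        rw [div_eq_iff (hne t ht)] at this
        linarith [this]
      rw [hgt]; ring
    rwa [hval] at this
  have hφconst := const_of_deriv0 φ hφD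
  intro t ht
  have hc := hφconst t ht
  simp only [hφ] at hc
  have e1 : Real.exp (-(α * t)) * Real.exp (α * t) = 1 := by
    rw [← Real.exp_add]; norm_num
  calc h t = h t * (Real.exp (-(α * t)) * Real.exp (α * t)) := by rw [e1, mul_one]
    _ = (h t * Real.exp (-(α * t))) * Real.exp (α * t) := by ring
    _ = (h 1 * Real.exp (-(α * 1))) * Real.exp (α * t) := by rw [hc]
    _ = h 1 * Real.exp (-α) * Real.exp (α * t) := by norm_num

/-- From `g² = c g'` for `g = h'/h`, `h` is a (shifted) power function. -/
lemma pow_case (h : ℝ → ℝ) (hs : ContDiffOn ℝ 3 h (Set.Ioi 0))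
    (hne : ∀ t > (0:ℝ), h t ≠ 0) (hde : ∀ t > (0:ℝ), deriv h t ≠ 0)
    (c : ℝ) (hc : c ≠ 0)
    (hode : ∀ t > (0:ℝ), (deriv h t / h t) ^ 2 = c * deriv (fun t => deriv h t / h t) t) :
    ∃ C β : ℝ, C ≠ 0 ∧ 0 ≤ β ∧ ∀ t > (0:ℝ), h t = C * (t + β) ^ (-c) := by
  have hC2 : ContDiffOn ℝ 2 (deriv h) (Set.Ioi 0) :=
    hs.deriv_of_isOpen isOpen_Ioi (by norm_num)
  have hD : ∀ t > (0:ℝ), HasDerivAt h (deriv h t) t := fun t ht =>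
    ((hs.contDiffAt (mem_nhds_pos ht)).differentiableAt (by norm_num)).hasDerivAt
  have hD2 : ∀ t > (0:ℝ), HasDerivAt (deriv h) (deriv (deriv h) t) t := fun t ht =>
    ((hC2.contDiffAt (mem_nhds_pos ht)).differentiableAt (by norm_num)).hasDerivAt
  set g : ℝ → ℝ := fun t => deriv h t / h t with hg
  have hgne : ∀ t > (0:ℝ), g t ≠ 0 := fun t ht => div_ne_zero (hde t ht) (hne t ht)
  have hgD : ∀ t > (0:ℝ), HasDerivAt g (deriv g t) t := fun t ht =>
    ((hD2 t ht).div (hD t ht) (hne t ht)).differentiableAt.hasDerivAt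
  set u : ℝ → ℝ := fun t => 1 / g t with hu
  have huD : ∀ t > (0:ℝ), HasDerivAt u (-(1/c)) t := by
    intro t ht
    have h1 := (hasDerivAt_const t (1:ℝ)).div (hgD t ht) (hgne t ht)
    have h2 : (0 * g t - 1 * deriv g t) / g t ^ 2 = -(1/c) := by
      have h3 := hode t ht
      have h4 : deriv g t = g t ^ 2 / c := by
        rw [eq_div_iff hc]; rw [hg]; linarith [h3]
      rw [h4]
      field_simp
      rw [div_eq_iff (hgne t ht)]; ring
    rwa [h2] at h1
  set v : ℝ → ℝ := fun t => u t + t / c with hv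
  have hvD : ∀ t > (0:ℝ), HasDerivAt v 0 t := by
    intro t ht
    have := (huD t ht).add ((hasDerivAt_id t).div_const c)
    exact this.congr_deriv (by ring)
  have hvconst := const_of_deriv0 v hvD
  set K := v 1 with hK
  have huval : ∀ t > (0:ℝ), u t = K - t / c := by
    intro t ht
    have := hvconst t ht
    rw [hv] at this
    simp only at this
    linarith [this]
  set β : ℝ := -(c * K) with hβ
  have hune : ∀ t > (0:ℝ), u t ≠ 0 := fun t ht => by
    rw [hu]
    exact one_div_ne_zero (hgne t ht)
  have htβ : ∀ t > (0:ℝ), t + β ≠ 0 := by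
    intro t ht hzero
    apply hune t ht
    rw [huval t ht, hβ] at *
    have : t = c * K := by linarith [hzero]
    rw [this]
    field_simp
    ring
  have hβ0 : 0 ≤ β := by
    by_contra hh
    push_neg at hh
    exact htβ (-β) (by linarith) (by ring)
  have htβpos : ∀ t > (0:ℝ), 0 < t + β := fun t ht => by linarith
  have hgval : ∀ t > (0:ℝ), g t = -c / (t + β) := by
    intro t ht
    have h1 : u t = -((t + β) / c) := by
      rw [huval t ht, hβ]; field_simp; ring
    have h2 : g t = 1 / u t := by
      rw [hu]
      field_simp
    rw [h2, h1]
    rw [div_neg, one_div_div, neg_div]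
  set φ : ℝ → ℝ := fun t => h t * (t + β) ^ c with hφ
  have hφD : ∀ t > (0:ℝ), HasDerivAt φ 0 t := by
    intro t ht
    have hr : HasDerivAt (fun t : ℝ => (t + β) ^ c) (c * (t + β) ^ (c - 1)) t := by
      have h1 := Real.hasDerivAt_rpow_const (x := t + β) (p := c) (Or.inl (htβ t ht))
      have h2 : HasDerivAt (fun t : ℝ => t + β) 1 t := (hasDerivAt_id t).add_const β
      refine (h1.comp t h2).congr_deriv ?_
      ring
    have hmul := (hD t ht).mul hr
    have hval : deriv h t * (t + β) ^ c + h t * (c * (t + β) ^ (c - 1)) = 0 := by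
      have hgt : deriv h t = -c / (t + β) * h t := by
        have := hgval t ht
        rw [hg] at this
        rw [div_eq_iff (hne t ht)] at this
        linarith [this]
      rw [hgt, Real.rpow_sub_one (htβ t ht)]
      field_simp
      ring
    rwa [hval] at hmul
  have hφconst := const_of_deriv0 φ hφD
  have hCne : h 1 * (1 + β) ^ c ≠ 0 :=
    mul_ne_zero (hne 1 one_pos) (ne_of_gt (Real.rpow_pos_of_pos (by linarith) c))
  refine ⟨h 1 * (1 + β) ^ c, β, hCne, hβ0, ?_⟩
  intro t ht
  have hc1 := hφconst t ht
  simp only [hφ] at hc1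
  have hpow : (t + β) ^ c ≠ 0 := ne_of_gt (Real.rpow_pos_of_pos (htβpos t ht) c)
  rw [Real.rpow_neg (le_of_lt (htβpos t ht))]
  field_simp
  linarith [hc1]

lemma deriv_facts_exp (h : ℝ → ℝ) (C α : ℝ) (hC : C ≠ 0)
    (hh : ∀ t > (0:ℝ), h t = C * Real.exp (α * t)) :
    ∀ t > (0:ℝ), deriv (fun s => deriv h s / h s) t = 0 := by
  have hev : ∀ t > (0:ℝ), deriv h t = C * (α * Real.exp (α * t)) := by
    intro t ht
    have heq : h =ᶠ[nhds t] fun s => C * Real.exp (α * s) := by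
      filter_upwards [mem_nhds_pos ht] with s hs using hh s hs
    rw [heq.deriv_eq]
    have h1 : HasDerivAt (fun s : ℝ => α * s) α t := by
      simpa using (hasDerivAt_id t).const_mul α
    have hd := ((Real.hasDerivAt_exp (α * t)).comp t h1).const_mul C
    have : HasDerivAt (fun s : ℝ => C * Real.exp (α * s)) (C * (α * Real.exp (α * t))) t := by
      exact hd.congr_deriv (by ring)
    exact this.deriv
  have hgev : ∀ t > (0:ℝ), deriv h t / h t = α := by
    intro t ht
    rw [hev t ht, hh t ht]
    have he : Real.exp (α * t) ≠ 0 := Real.exp_ne_zero _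
    field_simp
  intro t ht
  have heq2 : (fun s => deriv h s / h s) =ᶠ[nhds t] fun _ => α := by
    filter_upwards [mem_nhds_pos ht] with s hs using hgev s hs
  rw [heq2.deriv_eq, deriv_const]

lemma deriv_facts_pow (h : ℝ → ℝ) (C α β : ℝ) (hC : C ≠ 0) (hβ : 0 ≤ β)
    (hh : ∀ t > (0:ℝ), h t = C * (t + β) ^ α) :
    (∀ t > (0:ℝ), deriv h t / h t = α / (t + β)) ∧
    (∀ t > (0:ℝ), deriv (fun s => deriv h s / h s) t = -α / (t + β) ^ 2) := by
  have hpos : ∀ t > (0:ℝ), 0 < t + β := fun t ht => by linarith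
  have hder : ∀ t > (0:ℝ), deriv h t = C * (α * (t + β) ^ (α - 1)) := by
    intro t ht
    have heq : h =ᶠ[nhds t] fun s => C * (s + β) ^ α := by
      filter_upwards [mem_nhds_pos ht] with s hs using hh s hs
    rw [heq.deriv_eq]
    have h1 := Real.hasDerivAt_rpow_const (x := t + β) (p := α) (Or.inl (ne_of_gt (hpos t ht)))
    have h2 : HasDerivAt (fun s : ℝ => s + β) 1 t := (hasDerivAt_id t).add_const β
    have hd := (h1.comp t h2).const_mul C
    have : HasDerivAt (fun s : ℝ => C * (s + β) ^ α) (C * (α * (t + β) ^ (α - 1))) t := by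
      exact hd.congr_deriv (by ring)
    exact this.deriv
  have hgval : ∀ t > (0:ℝ), deriv h t / h t = α / (t + β) := by
    intro t ht
    rw [hder t ht, hh t ht, Real.rpow_sub_one (ne_of_gt (hpos t ht))]
    have hrne : (t + β) ^ α ≠ 0 := ne_of_gt (Real.rpow_pos_of_pos (hpos t ht) α)
    field_simp
  refine ⟨hgval, ?_⟩
  intro t ht
  have heq2 : (fun s => deriv h s / h s) =ᶠ[nhds t] fun s => α / (s + β) := by
    filter_upwards [mem_nhds_pos ht] with s hs using hgval s hs
  rw [heq2.deriv_eq]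
  have hd : HasDerivAt (fun s : ℝ => α / (s + β)) ((0 * (t + β) - α * 1) / (t + β) ^ 2) t :=
    (hasDerivAt_const t α).div ((hasDerivAt_id t).add_const β) (ne_of_gt (hpos t ht))
  rw [hd.deriv]
  ring

/-- Theorem 4.1: for `f = F(h₁(x₁)⋯hₙ(xₙ))` with `F' ≠ 0` and thrice
differentiable nonvanishing inner functions with nonvanishing first
derivatives, the Allen matrix of `f` is singular at every point of `ℝ₊ⁿ` iff
(a) two of the inner factors combine to an exponential
`γ e^{α₁ t + α₂ s}`, or (b) `h₁(x₁)⋯hₙ(xₙ) = γ (x₁+β₁)^{α₁}⋯(xₙ+βₙ)^{αₙ}`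
with nonzero `αᵢ` summing to `0`. -/
theorem stmt_7 (n : ℕ) (F : ℝ → ℝ)
    (hF1 : Differentiable ℝ F) (hF2 : Differentiable ℝ (deriv F))
    (hF' : ∀ u, deriv F u ≠ 0)
    (h : Fin n → ℝ → ℝ)
    (hsm : ∀ i, ContDiffOn ℝ 3 (h i) (Set.Ioi 0))
    (hne : ∀ i, ∀ t > (0 : ℝ), h i t ≠ 0)
    (hde : ∀ i, ∀ t > (0 : ℝ), deriv (h i) t ≠ 0)
    (f : (Fin n → ℝ) → ℝ)
    (hf : ∀ x : Fin n → ℝ, (∀ i, 0 < x i) → f x = F (∏ i, h i (x i))) :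
    (∀ x : Fin n → ℝ, (∀ i, 0 < x i) → (borderedHessian f x).det = 0) ↔
      ((∃ i j : Fin n, i ≠ j ∧ ∃ γ αi αj : ℝ, γ ≠ 0 ∧ αi ≠ 0 ∧ αj ≠ 0 ∧
          ∀ t > (0 : ℝ), ∀ s > (0 : ℝ),
            h i t * h j s = γ * Real.exp (αi * t + αj * s)) ∨
        (∃ γ : ℝ, γ ≠ 0 ∧ ∃ α β : Fin n → ℝ,
          (∀ i, α i ≠ 0) ∧ (∑ i, α i) = 0 ∧
          ∀ x : Fin n → ℝ, (∀ i, 0 < x i) →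
            (∏ i, h i (x i)) = γ * ∏ i, (x i + β i) ^ (α i))) := by
    classical
  have hC2 : ∀ i, ContDiffOn ℝ 2 (deriv (h i)) (Set.Ioi 0) := fun i =>
    (hsm i).deriv_of_isOpen isOpen_Ioi (by norm_num)
  have hD : ∀ i, ∀ t > (0:ℝ), HasDerivAt (h i) (deriv (h i) t) t := fun i t ht =>
    (((hsm i).contDiffAt (mem_nhds_pos ht)).differentiableAt (by norm_num)).hasDerivAt
  have hD2 : ∀ i, ∀ t > (0:ℝ), HasDerivAt (deriv (h i)) (deriv (deriv (h i)) t) t :=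
    fun i t ht =>
      (((hC2 i).contDiffAt (mem_nhds_pos ht)).differentiableAt (by norm_num)).hasDerivAt
  set g : Fin n → ℝ → ℝ := fun i t => deriv (h i) t / h i t with hgdef
  have hgne : ∀ i, ∀ t > (0:ℝ), g i t ≠ 0 := fun i t ht =>
    div_ne_zero (hde i t ht) (hne i t ht)
  have hgval : ∀ i, ∀ t > (0:ℝ), deriv (g i) t
      = (deriv (deriv (h i)) t * h i t - deriv (h i) t * deriv (h i) t) / h i t ^ 2 :=
    fun i t ht => ((hD2 i t ht).div (hD i t ht) (hne i t ht)).deriv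
  set P : (Fin n → ℝ) → ℝ := fun x => ∏ i, h i (x i) with hPdef
  have hPne : ∀ x : Fin n → ℝ, (∀ i, 0 < x i) → P x ≠ 0 := fun x hx =>
    Finset.prod_ne_zero_iff.2 fun i _ => hne i (x i) (hx i)
  have hupos : ∀ (x : Fin n → ℝ), (∀ i, 0 < x i) → ∀ i t, 0 < t →
      (∀ k, 0 < Function.update x i t k) := by
    intro x hx i t ht k
    rcases eq_or_ne k i with rfl | hki
    · rw [Function.update_self]; exact ht
    · rw [Function.update_of_ne hki]; exact hx k
  have hprod_update : ∀ (x : Fin n → ℝ) (i : Fin n) (t : ℝ),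
      ∏ k, h k (Function.update x i t k) = h i t * ∏ k ∈ univ.erase i, h k (x k) := by
    intro x i t
    rw [← Finset.mul_prod_erase univ (fun k => h k (Function.update x i t k))
      (Finset.mem_univ i), Function.update_self]
    congr 1
    refine Finset.prod_congr rfl fun k hk => ?_
    rw [Function.update_of_ne (Finset.mem_erase.1 hk).1]
  have hpd1 : ∀ (i : Fin n) (x : Fin n → ℝ), (∀ k, 0 < x k) → pderiv' f i x
      = deriv F (P x) * (deriv (h i) (x i) * ∏ k ∈ univ.erase i, h k (x k)) := by
    intro i x hx
    set Cc := ∏ k ∈ univ.erase i, h k (x k) with hCc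
    have hev : (fun t => f (Function.update x i t)) =ᶠ[nhds (x i)]
        (fun t => F (h i t * Cc)) := by
      filter_upwards [mem_nhds_pos (hx i)] with t ht
      rw [hf _ (hupos x hx i t ht), hprod_update x i t]
    have h1 : HasDerivAt (fun t => h i t * Cc) (deriv (h i) (x i) * Cc) (x i) :=
      (hD i _ (hx i)).mul_const Cc
    have hd : HasDerivAt (fun t => F (h i t * Cc))
        (deriv F (h i (x i) * Cc) * (deriv (h i) (x i) * Cc)) (x i) :=
      (hF1 (h i (x i) * Cc)).hasDerivAt.comp (x i) h1
    have : pderiv' f i x = deriv (fun t => F (h i t * Cc)) (x i) := by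
      rw [pderiv']
      exact hev.deriv_eq
    rw [this, hd.deriv]
    rw [show h i (x i) * Cc = P x from
      Finset.mul_prod_erase univ (fun k => h k (x k)) (Finset.mem_univ i)]
  have hpd2_diag : ∀ (i : Fin n) (x : Fin n → ℝ), (∀ k, 0 < x k) →
      pderiv' (pderiv' f i) i x
      = deriv (deriv F) (P x) * (deriv (h i) (x i) * ∏ k ∈ univ.erase i, h k (x k))
          * (deriv (h i) (x i) * ∏ k ∈ univ.erase i, h k (x k))
        + deriv F (P x) * (deriv (deriv (h i)) (x i) * ∏ k ∈ univ.erase i, h k (x k)) := by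
    intro i x hx
    set Cc := ∏ k ∈ univ.erase i, h k (x k) with hCc
    have hev : (fun t => pderiv' f i (Function.update x i t)) =ᶠ[nhds (x i)]
        (fun t => deriv F (h i t * Cc) * (deriv (h i) t * Cc)) := by
      filter_upwards [mem_nhds_pos (hx i)] with t ht
      rw [hpd1 i _ (hupos x hx i t ht)]
      have e1 : P (Function.update x i t) = h i t * Cc := hprod_update x i t
      have e2 : Function.update x i t i = t := Function.update_self i t x
      have e3 : (∏ k ∈ univ.erase i, h k (Function.update x i t k)) = Cc := by
        refine Finset.prod_congr rfl fun k hk => ?_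
        rw [Function.update_of_ne (Finset.mem_erase.1 hk).1]
      rw [e1, e2, e3]
    have hu : HasDerivAt (fun t => deriv F (h i t * Cc))
        (deriv (deriv F) (h i (x i) * Cc) * (deriv (h i) (x i) * Cc)) (x i) :=
      by have := (hF2 (h i (x i) * Cc)).hasDerivAt.comp (x i) ((hD i _ (hx i)).mul_const Cc); exact this
    have hv : HasDerivAt (fun t => deriv (h i) t * Cc)
        (deriv (deriv (h i)) (x i) * Cc) (x i) := (hD2 i _ (hx i)).mul_const Cc
    have hd : HasDerivAt (fun t => deriv F (h i t * Cc) * (deriv (h i) t * Cc)) _ (x i) := hu.mul hv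
    have : pderiv' (pderiv' f i) i x
        = deriv (fun t => deriv F (h i t * Cc) * (deriv (h i) t * Cc)) (x i) := by
      rw [pderiv']
      exact hev.deriv_eq
    rw [this, hd.deriv]
    rw [show h i (x i) * Cc = P x from
      Finset.mul_prod_erase univ (fun k => h k (x k)) (Finset.mem_univ i)]
  have hpd2_off : ∀ (i j : Fin n) (x : Fin n → ℝ), i ≠ j → (∀ k, 0 < x k) →
      pderiv' (pderiv' f j) i x
      = deriv (deriv F) (P x) * (deriv (h i) (x i) * ∏ k ∈ univ.erase i, h k (x k))
          * (deriv (h j) (x j) * ∏ k ∈ univ.erase j, h k (x k))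
        + deriv F (P x) * (deriv (h j) (x j)
            * (deriv (h i) (x i) * ∏ k ∈ (univ.erase j).erase i, h k (x k))) := by
    intro i j x hij hx
    set Ci := ∏ k ∈ univ.erase i, h k (x k) with hCi
    set Cij := ∏ k ∈ (univ.erase j).erase i, h k (x k) with hCij
    have himem : i ∈ univ.erase j := Finset.mem_erase.2 ⟨hij, Finset.mem_univ i⟩
    have hev : (fun t => pderiv' f j (Function.update x i t)) =ᶠ[nhds (x i)]
        (fun t => deriv F (h i t * Ci) * (deriv (h j) (x j) * (h i t * Cij))) := by
      filter_upwards [mem_nhds_pos (hx i)] with t ht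
      rw [hpd1 j _ (hupos x hx i t ht)]
      have e1 : P (Function.update x i t) = h i t * Ci := hprod_update x i t
      have e2 : Function.update x i t j = x j := Function.update_of_ne (Ne.symm hij) t x
      have e3 : (∏ k ∈ univ.erase j, h k (Function.update x i t k)) = h i t * Cij := by
        rw [← Finset.mul_prod_erase (univ.erase j)
          (fun k => h k (Function.update x i t k)) himem, Function.update_self]
        congr 1
        refine Finset.prod_congr rfl fun k hk => ?_
        rw [Function.update_of_ne (Finset.mem_erase.1 hk).1]
      rw [e1, e2, e3]
    have hu : HasDerivAt (fun t => deriv F (h i t * Ci))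
        (deriv (deriv F) (h i (x i) * Ci) * (deriv (h i) (x i) * Ci)) (x i) :=
      by have := (hF2 (h i (x i) * Ci)).hasDerivAt.comp (x i) ((hD i _ (hx i)).mul_const Ci); exact this
    have hw : HasDerivAt (fun t => deriv (h j) (x j) * (h i t * Cij))
        (deriv (h j) (x j) * (deriv (h i) (x i) * Cij)) (x i) :=
      ((hD i _ (hx i)).mul_const Cij).const_mul (deriv (h j) (x j))
    have hd : HasDerivAt (fun t => deriv F (h i t * Ci) * (deriv (h j) (x j) * (h i t * Cij))) _ (x i) := hu.mul hw
    have : pderiv' (pderiv' f j) i x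
        = deriv (fun t => deriv F (h i t * Ci) * (deriv (h j) (x j) * (h i t * Cij)))
            (x i) := by
      rw [pderiv']
      exact hev.deriv_eq
    rw [this, hd.deriv]
    have eP : h i (x i) * Ci = P x :=
      Finset.mul_prod_erase univ (fun k => h k (x k)) (Finset.mem_univ i)
    have eCj : h i (x i) * Cij = ∏ k ∈ univ.erase j, h k (x k) :=
      Finset.mul_prod_erase (univ.erase j) (fun k => h k (x k)) himem
    rw [eP]
    rw [show deriv (h j) (x j) * (h i (x i) * Cij)
        = deriv (h j) (x j) * ∏ k ∈ univ.erase j, h k (x k) by rw [← eCj]]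
  set lam : (Fin n → ℝ) → ℝ := fun x => deriv F (P x) * P x with hlamdef
  set Ac : (Fin n → ℝ) → ℝ :=
    fun x => deriv (deriv F) (P x) * P x ^ 2 + deriv F (P x) * P x with hAcdef
  have hlamne : ∀ x : Fin n → ℝ, (∀ i, 0 < x i) → lam x ≠ 0 := fun x hx =>
    mul_ne_zero (hF' _) (hPne x hx)
  have hmatch : ∀ x : Fin n → ℝ, (∀ i, 0 < x i) →
      borderedHessian f x = bmat n (fun i => lam x * g i (x i))
        (fun i j => Ac x * g i (x i) * g j (x j)
          + if i = j then lam x * deriv (g i) (x i) else 0) := by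
    intro x hx
    have hborder : ∀ i : Fin n, pderiv' f i x = lam x * g i (x i) := by
      intro i
      rw [hpd1 i x hx, hlamdef, hgdef]
      simp only
      have eP : h i (x i) * ∏ k ∈ univ.erase i, h k (x k) = P x :=
        Finset.mul_prod_erase univ (fun k => h k (x k)) (Finset.mem_univ i)
      rw [← eP]
      have hhi : h i (x i) ≠ 0 := hne i (x i) (hx i)
      field_simp
    ext a b
    refine Fin.cases ?_ (fun i' => ?_) a
    · refine Fin.cases ?_ (fun j' => ?_) b
      · simp [borderedHessian, bmat]
      · simp only [borderedHessian, bmat, Matrix.of_apply, Fin.cases_zero, Fin.cons_succ]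
        exact hborder j'
    · refine Fin.cases ?_ (fun j' => ?_) b
      · simp only [borderedHessian, bmat, Matrix.of_apply, Fin.cases_succ, Fin.cons_zero]
        exact hborder i'
      · simp only [borderedHessian, bmat, Matrix.of_apply, Fin.cases_succ, Fin.cons_succ]
        by_cases hij : i' = j'
        · subst hij
          rw [if_pos rfl, hpd2_diag i' x hx, hgval i' (x i') (hx i'), hAcdef, hlamdef, hgdef]
          simp only
          have eP : h i' (x i') * ∏ k ∈ univ.erase i', h k (x k) = P x :=
            Finset.mul_prod_erase univ (fun k => h k (x k)) (Finset.mem_univ i')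
          have hhi : h i' (x i') ≠ 0 := hne i' (x i') (hx i')
          rw [← eP]
          field_simp
          ring
        · rw [if_neg hij, hpd2_off i' j' x hij hx, hAcdef, hgdef]
          simp only
          have hhi : h i' (x i') ≠ 0 := hne i' (x i') (hx i')
          have hhj : h j' (x j') ≠ 0 := hne j' (x j') (hx j')
          have e1 : (∏ k ∈ univ.erase i', h k (x k)) = P x / h i' (x i') := by
            rw [eq_div_iff hhi, mul_comm]
            exact Finset.mul_prod_erase univ (fun k => h k (x k)) (Finset.mem_univ i')
          have e2 : (∏ k ∈ univ.erase j', h k (x k)) = P x / h j' (x j') := by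
            rw [eq_div_iff hhj, mul_comm]
            exact Finset.mul_prod_erase univ (fun k => h k (x k)) (Finset.mem_univ j')
          have e3 : (∏ k ∈ (univ.erase j').erase i', h k (x k))
              = P x / (h i' (x i') * h j' (x j')) := by
            rw [eq_div_iff (mul_ne_zero hhi hhj)]
            have eA : h i' (x i') * ∏ k ∈ (univ.erase j').erase i', h k (x k)
                = ∏ k ∈ univ.erase j', h k (x k) :=
              Finset.mul_prod_erase (univ.erase j') (fun k => h k (x k))
                (Finset.mem_erase.2 ⟨hij, Finset.mem_univ i'⟩)
            have eB : h j' (x j') * ∏ k ∈ univ.erase j', h k (x k) = P x :=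
              Finset.mul_prod_erase univ (fun k => h k (x k)) (Finset.mem_univ j')
            rw [show (∏ k ∈ (univ.erase j').erase i', h k (x k))
                  * (h i' (x i') * h j' (x j'))
                = h j' (x j') * (h i' (x i')
                    * ∏ k ∈ (univ.erase j').erase i', h k (x k)) from by ring, eA, eB]
          rw [e1, e2, e3]
          rw [add_zero]
          field_simp
  have hdet : ∀ x : Fin n → ℝ, (∀ i, 0 < x i) →
      (borderedHessian f x).det = -(lam x ^ (n+1))
        * ∑ k, g k (x k) ^ 2 * ∏ l ∈ univ.erase k, deriv (g l) (x l) := by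
    intro x hx
    rw [hmatch x hx]
    exact detB n (lam x) (Ac x) (hlamne x hx) _ _
  have hiff : (∀ x : Fin n → ℝ, (∀ i, 0 < x i) → (borderedHessian f x).det = 0) ↔
      (∀ x : Fin n → ℝ, (∀ i, 0 < x i) →
        ∑ k, g k (x k) ^ 2 * ∏ l ∈ univ.erase k, deriv (g l) (x l) = 0) := by
    constructor
    · intro H x hx
      have h0 := H x hx
      rw [hdet x hx] at h0
      have hp : lam x ^ (n+1) ≠ 0 := pow_ne_zero _ (hlamne x hx)
      rcases mul_eq_zero.1 h0 with h1 | h1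
      · exact absurd (neg_eq_zero.1 h1) hp
      · exact h1
    · intro H x hx
      rw [hdet x hx, H x hx, mul_zero]
  rw [hiff]
  constructor
  · -- forward: S ≡ 0 implies (a) or (b)
    intro Hs
    by_cases hA : ∃ i j : Fin n, i ≠ j ∧ (∀ t > (0:ℝ), deriv (g i) t = 0) ∧
        (∀ t > (0:ℝ), deriv (g j) t = 0)
    · left
      obtain ⟨i, j, hij, hdi, hdj⟩ := hA
      obtain ⟨Ci, αi, hCi, hαi, hhi⟩ := exp_case (h i) (hsm i) (hne i) (hde i) hdi
      obtain ⟨Cj, αj, hCj, hαj, hhj⟩ := exp_case (h j) (hsm j) (hne j) (hde j) hdj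
      refine ⟨i, j, hij, Ci * Cj, αi, αj, mul_ne_zero hCi hCj, hαi, hαj, ?_⟩
      intro t ht s hs
      rw [hhi t ht, hhj s hs, Real.exp_add]
      ring
    · right
      push_neg at hA
      have hpoint : ∀ i : Fin n, ∃ t, 0 < t ∧ deriv (g i) t ≠ 0 := by
        by_contra hcon
        push_neg at hcon
        obtain ⟨i0, hi0⟩ := hcon
        have hi0' : ∀ t > (0:ℝ), deriv (g i0) t = 0 := fun t ht => hi0 t ht
        have hprod0 : ∀ x : Fin n → ℝ, (∀ k, 0 < x k) →
            ∏ l ∈ univ.erase i0, deriv (g l) (x l) = 0 := by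
          intro x hx
          have hsum := Hs x hx
          rw [← Finset.add_sum_erase univ _ (Finset.mem_univ i0)] at hsum
          have hterm : ∀ k ∈ univ.erase i0,
              g k (x k) ^ 2 * ∏ l ∈ univ.erase k, deriv (g l) (x l) = 0 := by
            intro k hk
            have hi0mem : i0 ∈ univ.erase k :=
              Finset.mem_erase.2 ⟨Ne.symm (Finset.mem_erase.1 hk).1, Finset.mem_univ _⟩
            rw [Finset.prod_eq_zero hi0mem (hi0' (x i0) (hx i0)), mul_zero]
          rw [Finset.sum_eq_zero hterm, add_zero] at hsum
          have hgne2 : g i0 (x i0) ^ 2 ≠ 0 := pow_ne_zero 2 (hgne i0 (x i0) (hx i0))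
          exact (mul_eq_zero.1 hsum).resolve_left hgne2
        have hsel : ∀ l : Fin n, ∃ t, 0 < t ∧ (l ≠ i0 → deriv (g l) t ≠ 0) := by
          intro l
          by_cases hl : l = i0
          · exact ⟨1, one_pos, fun hc => absurd hl hc⟩
          · obtain ⟨t, ht, hdt⟩ := hA i0 l (fun hc => hl hc.symm) hi0'
            exact ⟨t, ht, fun _ => hdt⟩
        choose s hs1 hs2 using hsel
        have hcontra := hprod0 s hs1
        have : ∏ l ∈ univ.erase i0, deriv (g l) (s l) ≠ 0 :=
          Finset.prod_ne_zero_iff.2 fun l hl => hs2 l (Finset.mem_erase.1 hl).1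
        contradiction
      choose s hs1 hs2 using hpoint
      have hkey : ∀ j : Fin n, ∃ c : ℝ, c ≠ 0 ∧
          (∀ t > (0:ℝ), g j t ^ 2 = c * deriv (g j) t) := by
        intro j
        set Pj := ∏ l ∈ univ.erase j, deriv (g l) (s l) with hPj
        have hPjne : Pj ≠ 0 :=
          Finset.prod_ne_zero_iff.2 fun l _ => hs2 l
        set Rj := ∑ k ∈ univ.erase j,
          g k (s k) ^ 2 * ∏ l ∈ (univ.erase k).erase j, deriv (g l) (s l) with hRj
        have hrel : ∀ t > (0:ℝ), g j t ^ 2 * Pj + deriv (g j) t * Rj = 0 := by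
          intro t ht
          have hx : ∀ k, 0 < Function.update s j t k := hupos s hs1 j t ht
          have hsum := Hs (Function.update s j t) hx
          rw [← Finset.add_sum_erase univ _ (Finset.mem_univ j)] at hsum
          have e1 : g j (Function.update s j t j) ^ 2
              * ∏ l ∈ univ.erase j, deriv (g l) (Function.update s j t l)
              = g j t ^ 2 * Pj := by
            rw [Function.update_self]
            congr 1
            refine Finset.prod_congr rfl fun l hl => ?_
            rw [Function.update_of_ne (Finset.mem_erase.1 hl).1]
          have e2 : ∀ k ∈ univ.erase j, g k (Function.update s j t k) ^ 2
              * ∏ l ∈ univ.erase k, deriv (g l) (Function.update s j t l)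
              = deriv (g j) t * (g k (s k) ^ 2
                * ∏ l ∈ (univ.erase k).erase j, deriv (g l) (s l)) := by
            intro k hk
            have hkj : k ≠ j := (Finset.mem_erase.1 hk).1
            have hjmem : j ∈ univ.erase k :=
              Finset.mem_erase.2 ⟨Ne.symm hkj, Finset.mem_univ _⟩
            rw [Function.update_of_ne hkj]
            rw [← Finset.mul_prod_erase (univ.erase k) _ hjmem, Function.update_self]
            rw [show ∏ l ∈ (univ.erase k).erase j,
                  deriv (g l) (Function.update s j t l)
                = ∏ l ∈ (univ.erase k).erase j, deriv (g l) (s l) from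
              Finset.prod_congr rfl fun l hl => by
                rw [Function.update_of_ne (Finset.mem_erase.1 hl).1]]
            ring
          rw [e1, Finset.sum_congr rfl e2, ← Finset.mul_sum] at hsum
          linarith [hsum]
        refine ⟨-Rj / Pj, ?_, ?_⟩
        · intro hc0
          rw [div_eq_zero_iff] at hc0
          have hRj0 : Rj = 0 := by
            rcases hc0 with hc0 | hc0
            · linarith [hc0]
            · exact absurd hc0 hPjne
          have h1 := hrel 1 one_pos
          rw [hRj0, mul_zero, add_zero] at h1
          exact (mul_ne_zero (pow_ne_zero 2 (hgne j 1 one_pos)) hPjne) h1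
        · intro t ht
          have h1 := hrel t ht
          rw [div_mul_eq_mul_div, eq_div_iff hPjne]
          linarith [h1]
      choose c hc1 hc2 using hkey
      have hsumc : ∑ j, c j = 0 := by
        have hsum := Hs s hs1
        have e : ∀ k ∈ univ, g k (s k) ^ 2 * ∏ l ∈ univ.erase k, deriv (g l) (s l)
            = c k * ∏ l, deriv (g l) (s l) := by
          intro k _
          rw [hc2 k (s k) (hs1 k),
            ← Finset.mul_prod_erase univ (fun l => deriv (g l) (s l)) (Finset.mem_univ k)]
          ring
        rw [Finset.sum_congr rfl e, ← Finset.sum_mul] at hsum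
        have hPne' : (∏ l, deriv (g l) (s l)) ≠ 0 :=
          Finset.prod_ne_zero_iff.2 fun l _ => hs2 l
        exact (mul_eq_zero.1 hsum).resolve_right hPne'
      have hpow : ∀ j : Fin n, ∃ C β : ℝ, C ≠ 0 ∧ 0 ≤ β ∧
          ∀ t > (0:ℝ), h j t = C * (t + β) ^ (-(c j)) :=
        fun j => pow_case (h j) (hsm j) (hne j) (hde j) (c j) (hc1 j) (hc2 j)
      choose C β hC hβ hhval using hpow
      refine ⟨∏ j, C j, Finset.prod_ne_zero_iff.2 fun j _ => hC j,
        fun j => -(c j), β, fun j => neg_ne_zero.2 (hc1 j), ?_, ?_⟩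
      · rw [Finset.sum_neg_distrib, hsumc, neg_zero]
      · intro x hx
        rw [show (∏ i, h i (x i)) = ∏ i, (C i * (x i + β i) ^ (-(c i))) from
          Finset.prod_congr rfl fun i _ => hhval i (x i) (hx i), Finset.prod_mul_distrib]
  · -- backward: (a) or (b) implies S ≡ 0
    rintro (⟨i, j, hij, γ, αi, αj, hγ, hαi, hαj, hab⟩ | ⟨γ, hγ, α, β, hα, hsα, hb⟩)
    · -- exponential case
      have hDi : ∀ t > (0:ℝ), h i t
          = (γ * Real.exp (αj * 1) / h j 1) * Real.exp (αi * t) := by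
        intro t ht
        have hrel := hab t ht 1 one_pos
        rw [div_mul_eq_mul_div, eq_div_iff (hne j 1 one_pos)]
        rw [hrel, Real.exp_add]
        ring
      have hDj : ∀ s > (0:ℝ), h j s
          = (γ * Real.exp (αi * 1) / h i 1) * Real.exp (αj * s) := by
        intro s hs
        have hrel := hab 1 one_pos s hs
        rw [div_mul_eq_mul_div, eq_div_iff (hne i 1 one_pos)]
        rw [mul_comm (h j s) (h i 1), hrel, Real.exp_add]
        ring
      have hCine : γ * Real.exp (αj * 1) / h j 1 ≠ 0 :=
        div_ne_zero (mul_ne_zero hγ (Real.exp_ne_zero _)) (hne j 1 one_pos)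
      have hCjne : γ * Real.exp (αi * 1) / h i 1 ≠ 0 :=
        div_ne_zero (mul_ne_zero hγ (Real.exp_ne_zero _)) (hne i 1 one_pos)
      have hdi : ∀ t > (0:ℝ), deriv (g i) t = 0 :=
        deriv_facts_exp (h i) _ αi hCine hDi
      have hdj : ∀ t > (0:ℝ), deriv (g j) t = 0 :=
        deriv_facts_exp (h j) _ αj hCjne hDj
      intro x hx
      apply Finset.sum_eq_zero
      intro k _
      by_cases hki : k = i
      · subst hki
        have hjmem : j ∈ univ.erase k :=
          Finset.mem_erase.2 ⟨Ne.symm hij, Finset.mem_univ _⟩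
        rw [Finset.prod_eq_zero hjmem (hdj (x j) (hx j)), mul_zero]
      · have himem : i ∈ univ.erase k :=
          Finset.mem_erase.2 ⟨fun hc => hki hc.symm, Finset.mem_univ _⟩
        rw [Finset.prod_eq_zero himem (hdi (x i) (hx i)), mul_zero]
    · -- power case
      have hβ0 : ∀ k, 0 ≤ β k := by
        intro k
        by_contra hneg
        push_neg at hneg
        set y : Fin n → ℝ := Function.update (fun _ => (1:ℝ)) k (-β k) with hy
        have hyk : y k = -β k := by
          rw [hy]; exact Function.update_self k (-β k) (fun _ => (1:ℝ))
        have hypos : ∀ l, 0 < y l := by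
          intro l
          rcases eq_or_ne l k with rfl | hlk
          · rw [hyk]; linarith
          · rw [hy, Function.update_of_ne hlk]; norm_num
        have hbe := hb y hypos
        have hzero : (y k + β k) ^ (α k) = 0 := by
          rw [hyk, neg_add_cancel]
          exact Real.zero_rpow (hα k)
        rw [Finset.prod_eq_zero (f := fun i => (y i + β i) ^ (α i))
          (Finset.mem_univ k) hzero, mul_zero] at hbe
        exact (Finset.prod_ne_zero_iff.2 fun l _ => hne l (y l) (hypos l)) hbe
      have hupos1 : ∀ (k : Fin n) (t : ℝ), 0 < t → ∀ l, 0 < Function.update (fun _ => (1:ℝ)) k t l := by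
        intro k t ht l
        rcases eq_or_ne l k with rfl | hlk
        · rw [Function.update_self]; exact ht
        · rw [Function.update_of_ne hlk]; norm_num
      have hhk : ∀ k : Fin n, ∃ D : ℝ, D ≠ 0 ∧
          ∀ t > (0:ℝ), h k t = D * (t + β k) ^ (α k) := by
        intro k
        have h1βpos : ∀ l, (0:ℝ) < 1 + β l := fun l => by have := hβ0 l; linarith
        refine ⟨γ * (∏ l ∈ univ.erase k, (1 + β l) ^ (α l)) / ∏ l ∈ univ.erase k, h l 1,
          div_ne_zero (mul_ne_zero hγ (Finset.prod_ne_zero_iff.2 fun l _ =>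
            ne_of_gt (Real.rpow_pos_of_pos (h1βpos l) (α l))))
            (Finset.prod_ne_zero_iff.2 fun l _ => hne l 1 one_pos), ?_⟩
        intro t ht
        set y : Fin n → ℝ := Function.update (fun _ => (1:ℝ)) k t with hy
        have hbe := hb y (hupos1 k t ht)
        have eL : (∏ l, h l (y l)) = h k t * ∏ l ∈ univ.erase k, h l 1 := by
          rw [← Finset.mul_prod_erase univ (fun l => h l (y l)) (Finset.mem_univ k),
            hy, Function.update_self]
          congr 1
          refine Finset.prod_congr rfl fun l hl => ?_
          rw [Function.update_of_ne (Finset.mem_erase.1 hl).1]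
        have eR : (∏ l, (y l + β l) ^ (α l))
            = (t + β k) ^ (α k) * ∏ l ∈ univ.erase k, (1 + β l) ^ (α l) := by
          rw [← Finset.mul_prod_erase univ (fun l => (y l + β l) ^ (α l))
            (Finset.mem_univ k), hy, Function.update_self]
          congr 1
          refine Finset.prod_congr rfl fun l hl => ?_
          rw [Function.update_of_ne (Finset.mem_erase.1 hl).1]
        rw [eL, eR] at hbe
        rw [div_mul_eq_mul_div, eq_div_iff
          (Finset.prod_ne_zero_iff.2 fun l _ => hne l 1 one_pos)]
        rw [hbe]
        ring
      choose D hD hDval using hhk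
      have hgd : ∀ k : Fin n, (∀ t > (0:ℝ), deriv (h k) t / h k t = α k / (t + β k)) ∧
          (∀ t > (0:ℝ), deriv (fun s => deriv (h k) s / h k s) t = -(α k) / (t + β k) ^ 2) := by
        intro k
        have := deriv_facts_pow (h k) (D k) (α k) (β k) (hD k) (hβ0 k) (hDval k)
        exact ⟨this.1, fun t ht => this.2 t ht⟩
      intro x hx
      have hxβ : ∀ k, (0:ℝ) < x k + β k := fun k => by have := hβ0 k; have := hx k; linarith
      have hterm : ∀ k ∈ univ, g k (x k) ^ 2 * ∏ l ∈ univ.erase k, deriv (g l) (x l)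
          = -(α k) * ∏ l, (-(α l) / (x l + β l) ^ 2) := by
        intro k _
        have egk : g k (x k) = α k / (x k + β k) := (hgd k).1 (x k) (hx k)
        have edl : ∀ l ∈ univ.erase k, deriv (g l) (x l) = -(α l) / (x l + β l) ^ 2 :=
          fun l _ => (hgd l).2 (x l) (hx l)
        rw [egk, Finset.prod_congr rfl edl]
        rw [← Finset.mul_prod_erase univ (fun l => -(α l) / (x l + β l) ^ 2)
          (Finset.mem_univ k)]
        have hu2 : (x k + β k) ^ 2 ≠ 0 := pow_ne_zero 2 (ne_of_gt (hxβ k))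
        rw [show (α k / (x k + β k)) ^ 2
            = -(α k) * (-(α k) / (x k + β k) ^ 2) from by field_simp, mul_assoc]
      rw [Finset.sum_congr rfl hterm, ← Finset.sum_mul, Finset.sum_neg_distrib, hsα,
        neg_zero, zero_mul]
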